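/- Let T be a string of length n over Σ, let ℓ > 0 be an integer, and let Q be a string with ℓ ≤ |Q| ≤ n. Let j ∈ [1,ℓ] be the bd-anchor of Q[1..ℓ]. Then for every position p ∈ [1, n−|Q|+1], Q occurs at position p in T (i.e., T[p..p+|Q|−1] = Q) if and only if p+j−1 ∈ A_ℓ(T), T[p..p+j−1] = Q[1..j], and T[p+j−1..p+|Q|−1] = Q[j..|Q|]. -/

import Mathlib

open scoped Classical

variable {α : Type*} [LinearOrder α]

/-- The rotation of `W` starting at the 1-based position `j`. -/
def rot (W : List α) (j : ℕ) : List α := W.drop (j - 1) ++ W.take (j - 1)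

/-- The fragment `T[i..i+ℓ-1]` (1-based position `i`, length `ℓ`). -/
def frag (T : List α) (i ℓ : ℕ) : List α := (T.drop (i - 1)).take ℓ

/-- The `m`-fold concatenation `U^m`. -/
def listPow (U : List α) (m : ℕ) : List α := (List.replicate m U).flatten

/-- A nonempty string is primitive if it is not a power `U^m` with `m ≥ 2`. -/
def Primitive (X : List α) : Prop :=
  X ≠ [] ∧ ∀ (U : List α) (m : ℕ), 2 ≤ m → X ≠ listPow U m

/-- `j ∈ [1,|X|]` is a position at which a lexicographically minimal rotation of `X` starts. -/
def IsMinRotPos (X : List α) (j : ℕ) : Prop :=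
  j ∈ Finset.Icc 1 X.length ∧ ∀ k ∈ Finset.Icc 1 X.length, rot X j ≤ rot X k

/-- `j` is the bd-anchor of `X`: the smallest position of a lexicographically minimal rotation. -/
def IsBdAnchor (X : List α) (j : ℕ) : Prop :=
  IsMinRotPos X j ∧ ∀ k, IsMinRotPos X k → j ≤ k

/-- The set `A_ℓ(T)` of order-`ℓ` bd-anchors of `T` (1-based absolute positions). -/
def bdAnchors (ℓ : ℕ) (T : List α) : Set ℕ :=
  { p | ∃ i ∈ Finset.Icc 1 (T.length - ℓ + 1), ∃ j, IsBdAnchor (frag T i ℓ) j ∧ p = i - 1 + j }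


/-- Let `T` have length `n`, `ℓ > 0`, `Q` a pattern with `ℓ ≤ |Q| ≤ n`, and
`j` the bd-anchor of `Q[1..ℓ]`. Then for every `p ∈ [1, n-|Q|+1]`, `Q` occurs at position
`p` in `T` iff `p+j-1 ∈ A_ℓ(T)`, `T[p..p+j-1] = Q[1..j]`, and
`T[p+j-1..p+|Q|-1] = Q[j..|Q|]`. -/
theorem occurrence_iff_bd_anchor_hit (T Q : List α) (ℓ : ℕ) (hℓ : 0 < ℓ)
    (hQℓ : ℓ ≤ Q.length) (hQT : Q.length ≤ T.length)
    (j : ℕ) (hj : IsBdAnchor (frag Q 1 ℓ) j)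
    (p : ℕ) (hp : p ∈ Finset.Icc 1 (T.length - Q.length + 1)) :
    frag T p Q.length = Q ↔
      p + j - 1 ∈ bdAnchors ℓ T ∧
        frag T p j = frag Q 1 j ∧
        frag T (p + j - 1) (Q.length - j + 1) = frag Q j (Q.length - j + 1) := by
  have hjmem := hj.1.1
  rw [Finset.mem_Icc] at hjmem hp
  have hlen : (frag Q 1 ℓ).length = ℓ := by
    simp [frag]; omega
  rw [hlen] at hjmem
  obtain ⟨hj1, hjℓ⟩ := hjmem
  have hjq : j ≤ Q.length := le_trans hjℓ hQℓ
  have hp1 : 1 ≤ p := hp.1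
  constructor
  · intro h
    have h' : (T.drop (p-1)).take Q.length = Q := h
    have htakej : (T.drop (p-1)).take j = Q.take j := by
      rw [← h', List.take_take, Nat.min_eq_left hjq]
    have hdrop : ((T.drop (p-1)).drop (j-1)).take (Q.length - (j-1)) = Q.drop (j-1) := by
      have h2 := congrArg (List.drop (j-1)) h'
      rwa [List.drop_take] at h2
    refine ⟨⟨p, ?_, j, ?_, by omega⟩, ?_, ?_⟩
    · rw [Finset.mem_Icc]; omega
    · have hf : frag T p ℓ = frag Q 1 ℓ := by
        rw [show frag Q 1 ℓ = Q.take ℓ from by simp [frag]]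
        show (T.drop (p-1)).take ℓ = Q.take ℓ
        rw [← h', List.take_take, Nat.min_eq_left hQℓ]
      rw [hf]; exact hj
    · show (T.drop (p-1)).take j = (Q.drop (1-1)).take j
      simpa using htakej
    · show (T.drop (p+j-1-1)).take (Q.length - j + 1) =
        (Q.drop (j-1)).take (Q.length - j + 1)
      rw [← hdrop, List.take_take, List.drop_drop]
      congr 1
      · omega
      · congr 1; omega
  · rintro ⟨-, h1, h2⟩
    show (T.drop (p-1)).take Q.length = Q
    have h1' : (T.drop (p-1)).take j = Q.take j := by
      simpa [frag] using h1
    have e1 : (T.drop (p-1)).take (j-1) = Q.take (j-1) := by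
      have h3 := congrArg (List.take (j-1)) h1'
      rwa [List.take_take, List.take_take,
        Nat.min_eq_left (show j - 1 ≤ j from by omega)] at h3
    have h2' : (T.drop (p+j-1-1)).take (Q.length - j + 1) =
        (Q.drop (j-1)).take (Q.length - j + 1) := h2
    have e2 : ((T.drop (p-1)).drop (j-1)).take (Q.length - (j-1)) = Q.drop (j-1) := by
      rw [List.drop_drop, show p - 1 + (j-1) = p + j - 1 - 1 from by omega,
        show Q.length - (j-1) = Q.length - j + 1 from by omega, h2']
      exact List.take_of_length_le (by simp; omega)
    calc (T.drop (p-1)).take Q.length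
        = (T.drop (p-1)).take ((j-1) + (Q.length - (j-1))) := by
          congr 1; omega
      _ = (T.drop (p-1)).take (j-1) ++ ((T.drop (p-1)).drop (j-1)).take (Q.length - (j-1)) :=
          List.take_add
      _ = Q.take (j-1) ++ Q.drop (j-1) := by rw [e1, e2]
      _ = Q := List.take_append_drop _ _
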